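/- Let Q(x) = x^2 - p x + q with Δ = p^2 - 4q ≠ 0 and F = -1/Q. Then at every point where Q ≠ 0, Δ^2 * F^3 = (1/2) * (Q')^2 * F'' + 7 * Q' * F' + 16 * F. -/

import Mathlib

theorem F_cube_eq (p q : ℝ) (hΔ : p ^ 2 - 4 * q ≠ 0)
    (Q F : ℝ → ℝ) (hQ : ∀ x, Q x = x ^ 2 - p * x + q)
    (hF : ∀ x, F x = -1 / Q x) :
    ∀ x, Q x ≠ 0 →
      (p ^ 2 - 4 * q) ^ 2 * (F x) ^ 3 =
        (1 / 2) * (deriv Q x) ^ 2 * deriv (deriv F) x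
          + 7 * deriv Q x * deriv F x + 16 * F x := by
  intro x hx
  have hQfun : Q = fun y => y ^ 2 - p * y + q := funext hQ
  have hFfun : F = fun y => -(y ^ 2 - p * y + q)⁻¹ := by
    funext y
    rw [hF y, hQ y, neg_div, one_div]
  have hQx : x ^ 2 - p * x + q ≠ 0 := by rw [hQ x] at hx; exact hx
  -- derivative of Q
  have hQder : ∀ y : ℝ, HasDerivAt (fun z => z ^ 2 - p * z + q) (2 * y - p) y := by
    intro y
    have h1 : HasDerivAt (fun z : ℝ => z ^ 2) (2 * y) y := by
      simpa using hasDerivAt_pow 2 y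
    have h2 : HasDerivAt (fun z : ℝ => p * z) p y := by
      simpa using (hasDerivAt_id y).const_mul p
    simpa using (h1.sub h2).add_const q
  have hQ' : deriv Q x = 2 * x - p := by
    rw [hQfun]; exact (hQder x).deriv
  -- derivative of F at any point where Q ≠ 0
  have hFder : ∀ y : ℝ, y ^ 2 - p * y + q ≠ 0 →
      HasDerivAt F ((2 * y - p) / (y ^ 2 - p * y + q) ^ 2) y := by
    intro y hy
    rw [hFfun]
    have h := ((hQder y).fun_inv hy).fun_neg
    convert h using 1
    · rfl
    · rfl
    field_simp
  have hF' : deriv F x = (2 * x - p) / (x ^ 2 - p * x + q) ^ 2 :=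
    (hFder x hQx).deriv
  -- second derivative
  set G : ℝ → ℝ := fun y => (2 * y - p) / (y ^ 2 - p * y + q) ^ 2 with hG
  have hopen : IsOpen {y : ℝ | y ^ 2 - p * y + q ≠ 0} := by
    have : Continuous fun y : ℝ => y ^ 2 - p * y + q := by continuity
    exact isOpen_ne.preimage this
  have hev : deriv F =ᶠ[nhds x] G := by
    filter_upwards [hopen.mem_nhds hQx] with y hy
    exact (hFder y hy).deriv
  have hGder : HasDerivAt G
      ((2 * (x ^ 2 - p * x + q) ^ 2 -
        (2 * x - p) * (2 * (x ^ 2 - p * x + q) * (2 * x - p))) /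
        ((x ^ 2 - p * x + q) ^ 2) ^ 2) x := by
    have hnum : HasDerivAt (fun y : ℝ => 2 * y - p) 2 x := by
      simpa using ((hasDerivAt_id x).const_mul 2).sub_const p
    have hden : HasDerivAt (fun y : ℝ => (y ^ 2 - p * y + q) ^ 2)
        (2 * (x ^ 2 - p * x + q) * (2 * x - p)) x := by
      have := (hQder x).fun_pow 2
      simpa [mul_comm, mul_assoc, mul_left_comm] using this
    exact hnum.div hden (pow_ne_zero 2 hQx)
  have hF'' : deriv (deriv F) x =
      (2 * (x ^ 2 - p * x + q) ^ 2 -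
        (2 * x - p) * (2 * (x ^ 2 - p * x + q) * (2 * x - p))) /
        ((x ^ 2 - p * x + q) ^ 2) ^ 2 := by
    rw [hev.deriv_eq]
    exact hGder.deriv
  rw [hF x, hQ x, hQ', hF', hF'']
  field_simp
  ring
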